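/- Let E be a symmetric Dirichlet form on L²(X,m) with associated norm-capacity cap and energy space 𝔇. Let f ∈ 𝔇 admit a quasicontinuous representative, again denoted f, and let λ > 0. Then cap({x ∈ X : |f(x)| > λ}) ≤ λ⁻¹ ‖f‖_𝔇. -/

import Mathlib

open scoped ENNReal
open MeasureTheory

noncomputable section

variable {X : Type*} [TopologicalSpace X] [MeasurableSpace X] [BorelSpace X]
variable {m : Measure X} [SigmaFinite m]

/-- Convexity for an `ℝ≥0∞`-valued functional on `L²(X,m)`. -/
def IsConvexFunctional (E : Lp ℝ 2 m → ℝ≥0∞) : Prop :=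
  ∀ u v : Lp ℝ 2 m, ∀ a b : ℝ, 0 ≤ a → 0 ≤ b → a + b = 1 →
    E (a • u + b • v) ≤ ENNReal.ofReal a * E u + ENNReal.ofReal b * E v

/-- The real function `s ↦ ½((s+α)₊ − (s−α)₋)` appearing in the second defining
inequality of Dirichlet forms. -/
def medTrunc (α s : ℝ) : ℝ :=
  (max (s + α) 0 - max (-(s - α)) 0) / 2

/-- Cipriani–Grillo: a (nonlinear) Dirichlet form is a convex, lower semicontinuous
functional `E : L²(X,m) → [0,∞]` with dense effective domain satisfying the two
structural inequalities. The second one is stated for any `w ∈ L²` which is an a.e.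
representative of `½((u−v+α)₊ − (u−v−α)₋)`. -/
def IsDirichletForm (E : Lp ℝ 2 m → ℝ≥0∞) : Prop :=
  IsConvexFunctional E ∧ LowerSemicontinuous E ∧ Dense {u : Lp ℝ 2 m | E u < ⊤} ∧
  (∀ u v : Lp ℝ 2 m, E (u ⊓ v) + E (u ⊔ v) ≤ E u + E v) ∧
  (∀ u v w : Lp ℝ 2 m, ∀ α : ℝ, 0 < α →
    (∀ᵐ x ∂m, w x = medTrunc α (u x - v x)) →
    E (v + w) + E (u - w) ≤ E u + E v)

/-- `E` is symmetric: `E 0 = 0` and `E (-u) = E u`. -/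
def IsSymmetricFunctional (E : Lp ℝ 2 m → ℝ≥0∞) : Prop :=
  E 0 = 0 ∧ ∀ u : Lp ℝ 2 m, E (-u) = E u

/-- `E₁ u = ‖u‖₂² + E u`. -/
def EOne (E : Lp ℝ 2 m → ℝ≥0∞) (u : Lp ℝ 2 m) : ℝ≥0∞ :=
  ENNReal.ofReal (‖u‖ ^ 2) + E u

/-- The Luxemburg-type norm `‖u‖_𝔇 = inf {λ > 0 | E₁(u/λ) ≤ 1}`, with `inf ∅ = ∞`. -/
def Dnorm (E : Lp ℝ 2 m → ℝ≥0∞) (u : Lp ℝ 2 m) : ℝ≥0∞ :=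
  sInf (ENNReal.ofReal '' {l : ℝ | 0 < l ∧ EOne E (l⁻¹ • u) ≤ 1})

/-- The Dirichlet space `𝔇 = {u ∈ L² | ‖u‖_𝔇 < ∞}`. -/
def Dspace (E : Lp ℝ 2 m → ℝ≥0∞) : Set (Lp ℝ 2 m) :=
  {u : Lp ℝ 2 m | Dnorm E u < ⊤}

/-- The norm-capacity: `cap A = inf {‖u‖_𝔇 | u ≥ 1 a.e. on an open set U ⊇ A}`
(with `inf ∅ = ∞`). -/
def cap (E : Lp ℝ 2 m → ℝ≥0∞) (A : Set X) : ℝ≥0∞ :=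
  sInf (Dnorm E '' {u : Lp ℝ 2 m |
    ∃ U : Set X, IsOpen U ∧ A ⊆ U ∧ ∀ᵐ x ∂m, x ∈ U → 1 ≤ u x})

/-- `f : X → ℝ` is quasicontinuous: for every `ε > 0` there is an open set `O` with
`cap O ≤ ε` such that the restriction of `f` to `Oᶜ` is continuous. -/
def Quasicontinuous (E : Lp ℝ 2 m → ℝ≥0∞) (f : X → ℝ) : Prop :=
  ∀ ε : ℝ, 0 < ε → ∃ O : Set X, IsOpen O ∧ cap E O ≤ ENNReal.ofReal ε ∧ ContinuousOn f Oᶜ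


/-! ### Auxiliary lemmas -/

lemma E_abs_le (E : Lp ℝ 2 m → ℝ≥0∞) (hE : IsDirichletForm E)
    (hsym : IsSymmetricFunctional E) (u : Lp ℝ 2 m) : E |u| ≤ E u := by
  have h := hE.2.2.2.1 u (-u)
  have h1 : u ⊔ -u = |u| := rfl
  have h2 : u ⊓ -u = -|u| := by
    rw [← neg_neg (u ⊓ (-u)), neg_inf, neg_neg, ← h1, sup_comm]
  rw [h1, h2, hsym.2, hsym.2] at h
  rw [← two_mul, ← two_mul] at h
  exact (ENNReal.mul_le_mul_iff_right (by norm_num) (by norm_num)).mp h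

lemma abs_smul_Lp (c : ℝ) (hc : 0 ≤ c) (u : Lp ℝ 2 m) : |c • u| = c • |u| := by
  apply Lp.ext
  filter_upwards [Lp.coeFn_abs (c • u), Lp.coeFn_smul c u, Lp.coeFn_abs u,
    Lp.coeFn_smul c |u|] with x h1 h2 h3 h4
  rw [h1, h2, h4]
  simp only [Pi.smul_apply, smul_eq_mul, abs_mul, abs_of_nonneg hc, h3]

lemma EOne_convex (E : Lp ℝ 2 m → ℝ≥0∞) (hE : IsConvexFunctional E) :
    IsConvexFunctional (EOne E) := by
  intro u v a b ha hb hab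
  have hnorm : ‖a • u + b • v‖ ^ 2 ≤ a * ‖u‖ ^ 2 + b * ‖v‖ ^ 2 := by
    have h1 : ‖a • u + b • v‖ ≤ a * ‖u‖ + b * ‖v‖ := by
      calc ‖a • u + b • v‖ ≤ ‖a • u‖ + ‖b • v‖ := norm_add_le _ _
        _ = a * ‖u‖ + b * ‖v‖ := by
            rw [norm_smul, norm_smul, Real.norm_eq_abs, Real.norm_eq_abs,
              abs_of_nonneg ha, abs_of_nonneg hb]
    nlinarith [norm_nonneg (a • u + b • v), norm_nonneg u, norm_nonneg v,
      sq_nonneg (‖u‖ - ‖v‖), mul_nonneg ha hb]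
  calc EOne E (a • u + b • v)
      ≤ ENNReal.ofReal (a * ‖u‖ ^ 2 + b * ‖v‖ ^ 2)
        + (ENNReal.ofReal a * E u + ENNReal.ofReal b * E v) :=
        add_le_add (ENNReal.ofReal_le_ofReal hnorm) (hE u v a b ha hb hab)
    _ = ENNReal.ofReal a * EOne E u + ENNReal.ofReal b * EOne E v := by
        rw [ENNReal.ofReal_add (by positivity) (by positivity),
          ENNReal.ofReal_mul ha, ENNReal.ofReal_mul hb]
        unfold EOne; ring

lemma mem_Dset_add {E : Lp ℝ 2 m → ℝ≥0∞} (hE : IsConvexFunctional E)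
    {x y : Lp ℝ 2 m} {a b : ℝ}
    (hax : a ∈ {t : ℝ | 0 < t ∧ EOne E (t⁻¹ • x) ≤ 1})
    (hby : b ∈ {t : ℝ | 0 < t ∧ EOne E (t⁻¹ • y) ≤ 1}) :
    a + b ∈ {t : ℝ | 0 < t ∧ EOne E (t⁻¹ • (x + y)) ≤ 1} := by
  obtain ⟨ha, hax⟩ := hax
  obtain ⟨hb, hby⟩ := hby
  have hab : (0:ℝ) < a + b := by linarith
  refine ⟨hab, ?_⟩
  have hxy : (a + b)⁻¹ • (x + y)
      = (a / (a + b)) • (a⁻¹ • x) + (b / (a + b)) • (b⁻¹ • y) := by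
    rw [smul_smul, smul_smul, smul_add]
    have e1 : a / (a + b) * a⁻¹ = (a + b)⁻¹ := by field_simp; try ring
    have e2 : b / (a + b) * b⁻¹ = (a + b)⁻¹ := by field_simp; try ring
    rw [e1, e2]
  have hco := EOne_convex E hE
  have hsum : a / (a + b) + b / (a + b) = 1 := by field_simp; try ring
  calc EOne E ((a + b)⁻¹ • (x + y))
      ≤ ENNReal.ofReal (a / (a + b)) * EOne E (a⁻¹ • x)
        + ENNReal.ofReal (b / (a + b)) * EOne E (b⁻¹ • y) := by
        rw [hxy]
        exact hco _ _ _ _ (by positivity) (by positivity) hsum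
    _ ≤ ENNReal.ofReal (a / (a + b)) * 1 + ENNReal.ofReal (b / (a + b)) * 1 :=
        add_le_add (mul_le_mul_right hax _) (mul_le_mul_right hby _)
    _ = 1 := by
        rw [mul_one, mul_one, ← ENNReal.ofReal_add (by positivity) (by positivity),
          hsum, ENNReal.ofReal_one]

lemma Dnorm_add_le (E : Lp ℝ 2 m → ℝ≥0∞) (hE : IsConvexFunctional E)
    (x y : Lp ℝ 2 m) : Dnorm E (x + y) ≤ Dnorm E x + Dnorm E y := by
  refine ENNReal.le_of_forall_pos_le_add fun ε hε hfin => ?_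
  have hx : Dnorm E x < ⊤ := lt_of_le_of_lt le_self_add hfin
  have hy : Dnorm E y < ⊤ := lt_of_le_of_lt le_add_self hfin
  have hε2 : (0:ℝ≥0∞) < (ε : ℝ≥0∞) / 2 :=
    ENNReal.div_pos (by exact_mod_cast hε.ne') (by norm_num)
  have hx' : Dnorm E x < Dnorm E x + (ε : ℝ≥0∞) / 2 :=
    ENNReal.lt_add_right hx.ne hε2.ne'
  have hy' : Dnorm E y < Dnorm E y + (ε : ℝ≥0∞) / 2 :=
    ENNReal.lt_add_right hy.ne hε2.ne'
  obtain ⟨va, hva, hva'⟩ := sInf_lt_iff.mp (lt_of_le_of_lt le_rfl hx')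
  obtain ⟨vb, hvb, hvb'⟩ := sInf_lt_iff.mp (lt_of_le_of_lt le_rfl hy')
  obtain ⟨a, haS, rfl⟩ := hva
  obtain ⟨b, hbS, rfl⟩ := hvb
  have hmem := mem_Dset_add hE haS hbS
  have h1 : Dnorm E (x + y) ≤ ENNReal.ofReal (a + b) :=
    sInf_le ⟨a + b, hmem, rfl⟩
  calc Dnorm E (x + y) ≤ ENNReal.ofReal (a + b) := h1
    _ = ENNReal.ofReal a + ENNReal.ofReal b := ENNReal.ofReal_add haS.1.le hbS.1.le
    _ ≤ (Dnorm E x + (ε : ℝ≥0∞) / 2) + (Dnorm E y + (ε : ℝ≥0∞) / 2) :=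
        add_le_add hva'.le hvb'.le
    _ = Dnorm E x + Dnorm E y + ((ε : ℝ≥0∞) / 2 + (ε : ℝ≥0∞) / 2) := by ring
    _ = Dnorm E x + Dnorm E y + ε := by rw [ENNReal.add_halves]

lemma Dnorm_smul_le (E : Lp ℝ 2 m → ℝ≥0∞) {c : ℝ} (hc : 0 < c) (u : Lp ℝ 2 m) :
    Dnorm E (c • u) ≤ ENNReal.ofReal c * Dnorm E u := by
  have key : ∀ a ∈ {t : ℝ | 0 < t ∧ EOne E (t⁻¹ • u) ≤ 1},
      Dnorm E (c • u) ≤ ENNReal.ofReal c * ENNReal.ofReal a := by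
    intro a ⟨ha, haE⟩
    have hmem : c * a ∈ {t : ℝ | 0 < t ∧ EOne E (t⁻¹ • (c • u)) ≤ 1} := by
      refine ⟨by positivity, ?_⟩
      have : (c * a)⁻¹ • (c • u) = a⁻¹ • u := by
        rw [smul_smul]
        congr 1
        field_simp; try ring
      rw [this]; exact haE
    calc Dnorm E (c • u) ≤ ENNReal.ofReal (c * a) := sInf_le ⟨c * a, hmem, rfl⟩
      _ = ENNReal.ofReal c * ENNReal.ofReal a := ENNReal.ofReal_mul hc.le
  have hc0 : ENNReal.ofReal c ≠ 0 := by
    simp [ENNReal.ofReal_eq_zero, not_le, hc]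
  have hct : ENNReal.ofReal c ≠ ⊤ := ENNReal.ofReal_ne_top
  conv_rhs => rw [Dnorm, sInf_image]
  rw [ENNReal.mul_iInf_of_ne hc0 hct]
  refine le_iInf fun a => ?_
  rw [ENNReal.mul_iInf_of_ne hc0 hct]
  exact le_iInf fun haS => key a haS

lemma Dnorm_abs_le (E : Lp ℝ 2 m → ℝ≥0∞) (hE : IsDirichletForm E)
    (hsym : IsSymmetricFunctional E) (u : Lp ℝ 2 m) :
    Dnorm E |u| ≤ Dnorm E u := by
  apply sInf_le_sInf
  apply Set.image_mono
  rintro t ⟨ht, htE⟩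
  refine ⟨ht, le_trans ?_ htE⟩
  have habs : t⁻¹ • |u| = |t⁻¹ • u| := (abs_smul_Lp t⁻¹ (by positivity) u).symm
  rw [habs]
  unfold EOne
  exact add_le_add (by rw [norm_abs_eq_norm]) (E_abs_le E hE hsym _)

/-- Chebyshev-type inequality for the capacity: if `f ∈ 𝔇` has a quasicontinuous
representative (again denoted `f`), then `cap {|f| > λ} ≤ λ⁻¹ ‖f‖_𝔇`. -/
theorem cap_chebyshev
    (hsupp : ∀ U : Set X, IsOpen U → U.Nonempty → 0 < m U)
    (E : Lp ℝ 2 m → ℝ≥0∞) (hE : IsDirichletForm E) (hsym : IsSymmetricFunctional E)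
    (F : Lp ℝ 2 m) (hF : F ∈ Dspace E)
    (f : X → ℝ) (hqc : Quasicontinuous E f) (hrep : ∀ᵐ x ∂m, F x = f x)
    (l : ℝ) (hl : 0 < l) :
    cap E {x : X | l < |f x|} ≤ (ENNReal.ofReal l)⁻¹ * Dnorm E F := by
  have hFfin : Dnorm E F < ⊤ := hF
  have hl0 : ENNReal.ofReal l ≠ 0 := by simp [ENNReal.ofReal_eq_zero, not_le, hl]
  have hbfin : (ENNReal.ofReal l)⁻¹ * Dnorm E F < ⊤ :=
    ENNReal.mul_lt_top (ENNReal.inv_lt_top.mpr (by positivity)) hFfin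
  refine ENNReal.le_of_forall_pos_le_add fun ε hε _ => ?_
  have hε2 : (0:ℝ) < (ε : ℝ) / 2 := by positivity
  obtain ⟨O, hO, hcapO, hcont⟩ := hqc ((ε : ℝ) / 2) hε2
  -- the open set W with W ∩ Oᶜ = {|f| > l} ∩ Oᶜ
  have hT : IsOpen {y : ℝ | l < |y|} := by
    have : {y : ℝ | l < |y|} = (fun y : ℝ => |y|) ⁻¹' Set.Ioi l := rfl
    rw [this]
    exact isOpen_Ioi.preimage continuous_abs
  obtain ⟨W, hW, hWeq⟩ := continuousOn_iff'.mp hcont _ hT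
  -- a test function u for O with small Dnorm
  have hεE : ENNReal.ofReal ((ε : ℝ) / 2) = (ε : ℝ≥0∞) / 2 := by
    rw [ENNReal.ofReal_div_of_pos (by norm_num), ENNReal.ofReal_coe_nnreal]
    norm_num
  have hcapO' : cap E O < ⊤ := lt_of_le_of_lt hcapO (by rw [hεE]; exact ENNReal.div_lt_top ENNReal.coe_ne_top (by norm_num))
  have hδ : (0:ℝ≥0∞) < (ε : ℝ≥0∞) / 2 :=
    ENNReal.div_pos (by exact_mod_cast hε.ne') (by norm_num)
  have hlt : cap E O < cap E O + (ε : ℝ≥0∞) / 2 :=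
    ENNReal.lt_add_right hcapO'.ne hδ.ne'
  obtain ⟨d, hd, hd'⟩ := sInf_lt_iff.mp hlt
  obtain ⟨u, hu, rfl⟩ := hd
  obtain ⟨U, hU, hOU, huU⟩ := hu
  -- the test function for {|f| > l}
  set v : Lp ℝ 2 m := l⁻¹ • |F| + |u| with hv
  have hvtest : v ∈ {w : Lp ℝ 2 m |
      ∃ V : Set X, IsOpen V ∧ {x : X | l < |f x|} ⊆ V ∧ ∀ᵐ x ∂m, x ∈ V → 1 ≤ w x} := by
    refine ⟨W ∪ U, hW.union hU, ?_, ?_⟩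
    · intro x hx
      by_cases hxO : x ∈ O
      · exact Or.inr (hOU hxO)
      · have : x ∈ (fun x => f x) ⁻¹' {y : ℝ | l < |y|} ∩ Oᶜ := ⟨hx, hxO⟩
        rw [hWeq] at this
        exact Or.inl this.1
    · filter_upwards [huU, hrep, Lp.coeFn_add (l⁻¹ • |F|) |u|,
        Lp.coeFn_smul l⁻¹ |F|, Lp.coeFn_abs F, Lp.coeFn_abs u] with x h1 h2 h3 h4 h5 h6
      intro hx
      have hvx : v x = l⁻¹ * |f x| + |u x| := by
        rw [hv, h3, Pi.add_apply, h4, Pi.smul_apply, h5, h6, smul_eq_mul, h2]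
      rw [hvx]
      by_cases hxU : x ∈ U
      · have : (1:ℝ) ≤ u x := h1 hxU
        have h7 : (0:ℝ) ≤ l⁻¹ * |f x| := by positivity
        calc (1:ℝ) ≤ u x := this
          _ ≤ |u x| := le_abs_self _
          _ ≤ l⁻¹ * |f x| + |u x| := le_add_of_nonneg_left h7
      · have hxW : x ∈ W := by
          rcases hx with h | h
          · exact h
          · exact absurd h hxU
        have hxO : x ∉ O := fun hxO => hxU (hOU hxO)
        have hfx : l < |f x| := by
          have : x ∈ W ∩ Oᶜ := ⟨hxW, hxO⟩
          rw [← hWeq] at this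
          exact this.1
        have h8 : (1:ℝ) ≤ l⁻¹ * |f x| := by
          rw [inv_mul_eq_div, le_div_iff₀ hl, one_mul]
          exact hfx.le
        exact le_add_of_nonneg_right (abs_nonneg _) |>.trans' h8
  have hcaple : cap E {x : X | l < |f x|} ≤ Dnorm E v := sInf_le ⟨v, hvtest, rfl⟩
  calc cap E {x : X | l < |f x|} ≤ Dnorm E v := hcaple
    _ ≤ Dnorm E (l⁻¹ • |F|) + Dnorm E |u| := Dnorm_add_le E hE.1 _ _
    _ ≤ ENNReal.ofReal l⁻¹ * Dnorm E |F| + Dnorm E u :=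
        add_le_add (Dnorm_smul_le E (inv_pos.mpr hl) _) (Dnorm_abs_le E hE hsym u)
    _ ≤ ENNReal.ofReal l⁻¹ * Dnorm E F + (cap E O + (ε : ℝ≥0∞) / 2) :=
        add_le_add (mul_le_mul_right (Dnorm_abs_le E hE hsym F) _) hd'.le
    _ ≤ (ENNReal.ofReal l)⁻¹ * Dnorm E F
        + (ENNReal.ofReal ((ε : ℝ) / 2) + (ε : ℝ≥0∞) / 2) := by
        rw [ENNReal.ofReal_inv_of_pos hl]
        exact add_le_add_right (add_le_add_left hcapO _) _
    _ = (ENNReal.ofReal l)⁻¹ * Dnorm E F + ε := by rw [hεE, ENNReal.add_halves]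

end
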